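/- Let λ ∈ ℂ with 0 < |λ| < 1, let (c_n)_{n∈ℕ} be a sequence of complex numbers with |c_n| ≤ 1 for all n, and let h, j ∈ ℕ. Then the (2j+1)-th derivative at r = 0 of the function r ↦ e^{(1−λ)r²}·∑_{n=0}^∞ c_n·K^λ_{n,n+2h+1}(r) exists and equals C(2j+1, j−h)·(1−λ)^{2j+2}·λ^{h−j}·∑_{n=max(0, j−h)}^∞ c_n·λ^n·√((n+2h+1)!·n!)/(n−j+h)!, where C(2j+1, j−h) denotes the binomial coefficient, interpreted as 0 when j < h, and the series on the right converges absolutely. -/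

import Mathlib

set_option maxHeartbeats 2000000

open MeasureTheory Filter

/-- The function `K^λ_{n,n+k}(r) = √(n!/(n+k)!) (1−λ)^{k+1} e^{−(1−λ)r²} r^k
·∑_{u=0}^n (λ^{n−u}/u!) C(n+k, n−u) (1−λ)^{2u} r^{2u}`. -/
noncomputable def Kfun (lam : ℂ) (n k : ℕ) (r : ℝ) : ℂ :=
  ((Real.sqrt ((n.factorial : ℝ) / ((n + k).factorial : ℝ)) : ℝ) : ℂ) * (1 - lam) ^ (k + 1) *
    Complex.exp (-(1 - lam) * (r : ℂ) ^ 2) * (r : ℂ) ^ k *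
    ∑ u ∈ Finset.range (n + 1),
      (lam ^ (n - u) / (u.factorial : ℂ)) * (((n + k).choose (n - u) : ℕ) : ℂ) *
        (1 - lam) ^ (2 * u) * (r : ℂ) ^ (2 * u)


noncomputable def Aco (lam : ℂ) (c : ℕ → ℂ) (k n u : ℕ) : ℂ :=
  c n * ((Real.sqrt ((n.factorial : ℝ) / ((n + k).factorial : ℝ)) : ℝ) : ℂ) * (1 - lam) ^ (k + 1) *
    (lam ^ (n - u) / (u.factorial : ℂ)) * (((n + k).choose (n - u) : ℕ) : ℂ) * (1 - lam) ^ (2 * u)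

noncomputable def aco (lam : ℂ) (c : ℕ → ℂ) (k u : ℕ) : ℂ := ∑' s : ℕ, Aco lam c k (s + u) u

noncomputable def coefn (lam : ℂ) (c : ℕ → ℂ) (h l : ℕ) : ℂ :=
  if l % 2 = 1 ∧ 2 * h + 1 ≤ l then aco lam c (2 * h + 1) ((l - (2 * h + 1)) / 2) else 0


lemma cKfun_eq (lam : ℂ) (c : ℕ → ℂ) (k n : ℕ) (r : ℝ) :
    c n * Kfun lam n k r = Complex.exp (-(1 - lam) * (r : ℂ) ^ 2) *
      ∑ u ∈ Finset.range (n + 1), Aco lam c k n u * (r : ℂ) ^ (k + 2 * u) := by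
  simp only [Kfun, Aco, Finset.mul_sum]
  apply Finset.sum_congr rfl
  intro u _
  ring


lemma norm_Aco_le (lam : ℂ) (c : ℕ → ℂ) (hc : ∀ n, ‖c n‖ ≤ 1) (k s u : ℕ) :
    ‖Aco lam c k (s + u) u‖ ≤
      ‖1 - lam‖ ^ (k + 1) * (‖lam‖ ^ s / u.factorial) *
        (((s + u + k : ℕ) : ℝ) ^ (k + u) / (k + u).factorial) * ‖1 - lam‖ ^ (2 * u) := by
  have hsub : (s + u) - u = s := by omega
  have hch : (((s + u + k).choose s : ℕ) : ℝ) ≤ ((s + u + k : ℕ) : ℝ) ^ (k + u) / (k + u).factorial := by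
    rw [le_div_iff₀ (by positivity)]
    have h1 : (s + u + k).choose s = (s + u + k).choose (k + u) := by
      rw [← Nat.choose_symm (show k + u ≤ s + u + k by omega)]
      congr 1
      omega
    have h2 : (s + u + k).choose (k + u) * (k + u).factorial ≤ (s + u + k) ^ (k + u) := by
      calc (s + u + k).choose (k + u) * (k + u).factorial
          = (s + u + k).descFactorial (k + u) := by
            rw [Nat.descFactorial_eq_factorial_mul_choose]; ring
        _ ≤ (s + u + k) ^ (k + u) := Nat.descFactorial_le_pow _ _
    calc (((s + u + k).choose s : ℕ) : ℝ) * (k + u).factorial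
        = (((s + u + k).choose (k + u) * (k + u).factorial : ℕ) : ℝ) := by push_cast [h1]; ring
      _ ≤ _ := by exact_mod_cast Nat.cast_le.mpr h2
  have hsqrt : Real.sqrt (((s + u).factorial : ℝ) / ((s + u + k).factorial : ℝ)) ≤ 1 := by
    rw [show (1 : ℝ) = Real.sqrt 1 from (Real.sqrt_one).symm]
    apply Real.sqrt_le_sqrt
    rw [div_le_one (by positivity)]
    exact_mod_cast Nat.factorial_le (by omega)
  have expand : ‖Aco lam c k (s + u) u‖ =
      ‖c (s + u)‖ * Real.sqrt (((s + u).factorial : ℝ) / ((s + u + k).factorial : ℝ)) *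
        ‖1 - lam‖ ^ (k + 1) * (‖lam‖ ^ s / u.factorial) *
        (((s + u + k).choose s : ℕ) : ℝ) * ‖1 - lam‖ ^ (2 * u) := by
    simp only [Aco, hsub, norm_mul, norm_div, norm_pow, Complex.norm_real, Real.norm_eq_abs,
      Complex.norm_natCast, abs_of_nonneg (Real.sqrt_nonneg _)]
  rw [expand]
  calc ‖c (s + u)‖ * Real.sqrt (((s + u).factorial : ℝ) / ((s + u + k).factorial : ℝ)) *
        ‖1 - lam‖ ^ (k + 1) * (‖lam‖ ^ s / u.factorial) *
        (((s + u + k).choose s : ℕ) : ℝ) * ‖1 - lam‖ ^ (2 * u)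
      ≤ 1 * 1 * ‖1 - lam‖ ^ (k + 1) * (‖lam‖ ^ s / u.factorial) *
        (((s + u + k : ℕ) : ℝ) ^ (k + u) / (k + u).factorial) * ‖1 - lam‖ ^ (2 * u) := by
        gcongr <;> first
          | exact hc _
          | exact hsqrt
          | positivity
    _ = _ := by ring

/-- The key 2D summability. `p = (u, s)`. -/
lemma summable2 (lam : ℂ) (hlam1 : ‖lam‖ < 1) (c : ℕ → ℂ)
    (hc : ∀ n, ‖c n‖ ≤ 1) (k : ℕ) (R : ℝ) (hR : 0 ≤ R) :
    Summable (fun p : ℕ × ℕ => ‖Aco lam c k (p.2 + p.1) p.1‖ * R ^ (k + 2 * p.1)) := by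
  set L := ‖lam‖ with hL
  have hL0 : 0 ≤ L := norm_nonneg _
  set ε : ℝ := (1 - L) / 2 with hε
  have hε0 : 0 < ε := by simp only [hε]; linarith
  set B := ‖1 - lam‖ with hB
  have hB0 : 0 ≤ B := norm_nonneg _
  set ρ : ℝ := Real.exp ε * L with hρ
  have hρ0 : 0 ≤ ρ := by positivity
  have hρ1 : ρ < 1 := by
    have h1 : L ≤ 1 - ε := by simp only [hε]; linarith
    have h2 : Real.exp ε * (1 - ε) < 1 := by
      have h0 := Real.add_one_lt_exp (x := -ε) (by linarith)
      have h3 : Real.exp ε * (1 - ε) < Real.exp ε * Real.exp (-ε) := by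
        apply mul_lt_mul_of_pos_left (by linarith) (Real.exp_pos ε)
      rwa [← Real.exp_add, add_neg_cancel, Real.exp_zero] at h3
    calc ρ = Real.exp ε * L := rfl
      _ ≤ Real.exp ε * (1 - ε) := mul_le_mul_of_nonneg_left h1 (Real.exp_pos ε).le
      _ < 1 := h2
  set q : ℝ := Real.exp ε * B ^ 2 * R ^ 2 / ε with hq
  have hq0 : 0 ≤ q := by positivity
  set D : ℝ := B ^ (k + 1) * R ^ k * Real.exp (ε * k) / ε ^ k with hD
  have hD0 : 0 ≤ D := by positivity
  have hmaj : Summable (fun p : ℕ × ℕ => (D * (q ^ p.1 / p.1.factorial)) * ρ ^ p.2) := by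
    have h1 : Summable (fun u : ℕ => ‖D * (q ^ u / u.factorial)‖) := by
      have he : ∀ u : ℕ, ‖D * (q ^ u / u.factorial)‖ = D * (q ^ u / u.factorial) := fun u => by
        rw [Real.norm_eq_abs, abs_of_nonneg (by positivity)]
      simp only [he]
      exact (Real.summable_pow_div_factorial q).mul_left D
    have h2 : Summable (fun s : ℕ => ‖ρ ^ s‖) := by
      simp only [norm_pow, Real.norm_eq_abs, abs_of_nonneg hρ0]
      exact summable_geometric_of_lt_one hρ0 hρ1
    exact summable_mul_of_summable_norm h1 h2
  apply Summable.of_nonneg_of_le (fun p => by positivity) (fun p => ?_) hmaj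
  obtain ⟨u, s⟩ := p
  simp only
  have h1 := norm_Aco_le lam c hc k s u
  have hpow : (((s + u + k : ℕ) : ℝ)) ^ (k + u) / ((k + u).factorial : ℝ) ≤
      Real.exp (ε * ((s + u + k : ℕ) : ℝ)) / ε ^ (k + u) := by
    rw [div_le_div_iff₀ (by positivity) (by positivity)]
    have h5 := Real.pow_div_factorial_le_exp (x := ε * ((s + u + k : ℕ) : ℝ)) (by positivity) (k + u)
    rw [div_le_iff₀ (by positivity)] at h5
    calc ((s + u + k : ℕ) : ℝ) ^ (k + u) * ε ^ (k + u)
        = (ε * ((s + u + k : ℕ) : ℝ)) ^ (k + u) := by rw [mul_pow]; ring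
      _ ≤ Real.exp (ε * ((s + u + k : ℕ) : ℝ)) * (k + u).factorial := h5
  have hexp : Real.exp (ε * ((s + u + k : ℕ) : ℝ)) =
      Real.exp ε ^ s * Real.exp ε ^ u * Real.exp (ε * k) := by
    rw [← Real.exp_nat_mul, ← Real.exp_nat_mul, ← Real.exp_add, ← Real.exp_add]
    congr 1
    push_cast
    ring
  calc ‖Aco lam c k (s + u) u‖ * R ^ (k + 2 * u)
      ≤ (B ^ (k + 1) * (L ^ s / u.factorial) *
          (((s + u + k : ℕ) : ℝ) ^ (k + u) / (k + u).factorial) * B ^ (2 * u)) *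
          R ^ (k + 2 * u) := by
        apply mul_le_mul_of_nonneg_right h1 (by positivity)
    _ ≤ (B ^ (k + 1) * (L ^ s / u.factorial) *
          (Real.exp (ε * ((s + u + k : ℕ) : ℝ)) / ε ^ (k + u)) * B ^ (2 * u)) *
          R ^ (k + 2 * u) := by
        gcongr
    _ = D * (q ^ u / u.factorial) * ρ ^ s := by
        rw [hexp]
        simp only [hD, hq, hρ]
        clear_value ε
        rw [div_pow, pow_add]
        field_simp
        ring

section main
variable (lam : ℂ) (hlam1 : ‖lam‖ < 1) (c : ℕ → ℂ) (hc : ∀ n, ‖c n‖ ≤ 1)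
  (h : ℕ) (F : ℝ → ℂ)
  (hF : ∀ r : ℝ, F r = Complex.exp ((1 - lam) * (r : ℂ) ^ 2) *
      ∑' n : ℕ, c n * Kfun lam n (2 * h + 1) r)

include hlam1 hc in
lemma hasSum_coefn (hF : ∀ r : ℝ, F r = Complex.exp ((1 - lam) * (r : ℂ) ^ 2) *
      ∑' n : ℕ, c n * Kfun lam n (2 * h + 1) r) (r : ℝ) :
    HasSum (fun l : ℕ => coefn lam c h l * (r : ℂ) ^ l) (F r) := by
  set k := 2 * h + 1 with hk
  set f : ℕ × ℕ → ℂ := fun p => Aco lam c k (p.2 + p.1) p.1 * (r : ℂ) ^ (k + 2 * p.1) with hf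
  have hS1 : Summable f := by
    apply Summable.of_norm
    have h2 := summable2 lam hlam1 c hc k |r| (abs_nonneg r)
    have he : ∀ p : ℕ × ℕ, ‖f p‖ = ‖Aco lam c k (p.2 + p.1) p.1‖ * |r| ^ (k + 2 * p.1) := by
      intro p
      simp [hf, norm_mul, norm_pow, Complex.norm_real, Real.norm_eq_abs]
    simpa only [he] using h2
  set ι : ℕ × ℕ → ℕ × ℕ := fun p => (p.2 + p.1, p.1) with hιdef
  set T : ℕ × ℕ → ℂ := fun q => if q.2 ≤ q.1 then Aco lam c k q.1 q.2 * (r : ℂ) ^ (k + 2 * q.2) else 0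
    with hT
  have hι : Function.Injective ι := by
    rintro ⟨u, s⟩ ⟨u', s'⟩ hpq
    simp only [hιdef, Prod.mk.injEq] at hpq
    obtain ⟨h1, h2⟩ := hpq
    simp only [Prod.mk.injEq]
    omega
  have hTι : T ∘ ι = f := by
    funext p
    simp only [Function.comp, hιdef, hT, hf]
    rw [if_pos (by omega)]
  have hvan : ∀ q ∉ Set.range ι, T q = 0 := by
    intro q hq
    simp only [hT]
    split_ifs with hcnd
    · exfalso
      exact hq ⟨(q.2, q.1 - q.2), by simp only [hιdef]; ext <;> simp <;> omega⟩
    · rfl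
  have hST : Summable T := (hι.summable_iff hvan).mp (hTι ▸ hS1)
  have hFr : F r = ∑' n : ℕ, ∑ u ∈ Finset.range (n + 1), Aco lam c k n u * (r : ℂ) ^ (k + 2 * u) := by
    rw [hF r, tsum_congr (fun n => cKfun_eq lam c k n r), tsum_mul_left, ← mul_assoc,
      ← Complex.exp_add]
    have : (1 - lam) * (r : ℂ) ^ 2 + -(1 - lam) * (r : ℂ) ^ 2 = 0 := by ring
    rw [this, Complex.exp_zero, one_mul]
  have htsum_eq : ∑' q, T q = F r := by
    rw [Summable.tsum_prod' hST (fun n => hST.prod_factor n)]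
    have hinner : ∀ n, ∑' u, T (n, u) =
        ∑ u ∈ Finset.range (n + 1), Aco lam c k n u * (r : ℂ) ^ (k + 2 * u) := by
      intro n
      rw [tsum_eq_sum (s := Finset.range (n + 1)) ?_]
      · apply Finset.sum_congr rfl
        intro u hu
        simp only [hT]
        rw [if_pos (by simp only [Finset.mem_range] at hu; omega)]
      · intro u hu
        simp only [Finset.mem_range] at hu
        simp only [hT]
        rw [if_neg (by omega)]
    rw [tsum_congr hinner, ← hFr]
  have hSum_f : HasSum f (F r) := by
    rw [← hTι]
    exact (hι.hasSum_iff hvan).mpr (htsum_eq ▸ hST.hasSum)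
  have hfib : ∀ u : ℕ, HasSum (fun s => f (u, s)) (aco lam c k u * (r : ℂ) ^ (k + 2 * u)) := by
    intro u
    have hinj : Function.Injective (fun s : ℕ => ((u, s) : ℕ × ℕ)) := by
      intro a b hab
      simpa using congrArg Prod.snd hab
    have h2 : Summable fun s => f (u, s) := hS1.comp_injective hinj
    have h3 := h2.hasSum
    have h4 : ∑' s, f (u, s) = aco lam c k u * (r : ℂ) ^ (k + 2 * u) := by
      simp only [hf, aco]
      rw [tsum_mul_right]
    rwa [h4] at h3
  have hmain : HasSum (fun u => aco lam c k u * (r : ℂ) ^ (k + 2 * u)) (F r) :=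
    hSum_f.prod_fiberwise hfib
  have hψ : Function.Injective (fun u : ℕ => k + 2 * u) := by
    intro a b hab
    simp only at hab
    omega
  have hcoef0 : ∀ l ∉ Set.range (fun u : ℕ => k + 2 * u), coefn lam c h l * (r : ℂ) ^ l = 0 := by
    intro l hl
    simp only [coefn]
    split_ifs with hcnd
    · exact absurd ⟨(l - k) / 2, by simp only; omega⟩ hl
    · simp
  refine (hψ.hasSum_iff hcoef0).mp ?_
  convert hmain using 1
  funext u
  simp only [Function.comp, coefn]
  rw [if_pos ⟨by omega, by omega⟩]
  congr 2
  omega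

include hlam1 hc in
lemma summable_norm_coefn (R : ℝ) (hR : 0 ≤ R) :
    Summable (fun l : ℕ => ‖coefn lam c h l‖ * R ^ l) := by
  set k := 2 * h + 1 with hk
  have S2 := summable2 lam hlam1 c hc k R hR
  have SB := summable2 lam hlam1 c hc k 1 zero_le_one
  have hAsum : ∀ u : ℕ, Summable fun s => ‖Aco lam c k (s + u) u‖ := by
    intro u
    have := SB.prod_factor u
    simpa using this
  set g : ℕ → ℝ := fun u => ∑' s, ‖Aco lam c k (s + u) u‖ * R ^ (k + 2 * u) with hg
  have hgsum : Summable g := by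
    have := S2.hasSum.prod_fiberwise (fun u => (S2.prod_factor u).hasSum)
    exact this.summable
  have hψ : Function.Injective (fun u : ℕ => k + 2 * u) := by
    intro a b hab
    simp only at hab
    omega
  have hvan : ∀ l ∉ Set.range (fun u : ℕ => k + 2 * u), ‖coefn lam c h l‖ * R ^ l = 0 := by
    intro l hl
    simp only [coefn]
    split_ifs with hcnd
    · exact absurd ⟨(l - k) / 2, by simp only; omega⟩ hl
    · simp
  refine (hψ.summable_iff hvan).mp ?_
  apply Summable.of_nonneg_of_le (fun u => by simp only [Function.comp]; positivity) (fun u => ?_) hgsum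
  simp only [Function.comp, coefn]
  rw [if_pos ⟨by omega, by omega⟩]
  have hu2 : (k + 2 * u - k) / 2 = u := by omega
  rw [hu2]
  calc ‖aco lam c k u‖ * R ^ (k + 2 * u)
      ≤ (∑' s, ‖Aco lam c k (s + u) u‖) * R ^ (k + 2 * u) := by
        apply mul_le_mul_of_nonneg_right (norm_tsum_le_tsum_norm (hAsum u)) (by positivity)
    _ = g u := by simp only [hg]; exact tsum_mul_right.symm

end main

lemma sumabs13 (lam : ℂ) (hlam0 : 0 < ‖lam‖) (hlam1 : ‖lam‖ < 1)
    (c : ℕ → ℂ) (hc : ∀ n, ‖c n‖ ≤ 1) (h j : ℕ) :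
    Summable (fun m : ℕ => ‖c ((j - h) + m) * lam ^ ((j - h) + m) *
        ((Real.sqrt ((((j - h) + m + 2 * h + 1).factorial : ℝ) * (((j - h) + m).factorial : ℝ)) : ℝ) : ℂ) /
        ((((j - h) + m + h - j).factorial : ℕ) : ℂ)‖) := by
  set L := ‖lam‖ with hL
  have hL0 : 0 ≤ L := norm_nonneg _
  set D := j + 2 * h + 1 with hD
  -- majorant summable
  have hgeo : Summable (fun m : ℕ => ((m : ℝ)) ^ D * L ^ m) := by
    have := summable_pow_mul_geometric_of_norm_lt_one (R := ℝ) D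
      (r := L) (by rwa [Real.norm_eq_abs, abs_of_nonneg hL0])
    exact this
  have hshift : Summable (fun m : ℕ => (((m + D : ℕ)) : ℝ) ^ D * L ^ (m + D)) := by
    have := hgeo.comp_injective (add_left_injective D)
    exact this
  have hmaj : Summable (fun m : ℕ => (((m + D : ℕ)) : ℝ) ^ D * L ^ m) := by
    have heq : (fun m : ℕ => (((m + D : ℕ)) : ℝ) ^ D * L ^ m) =
        fun m : ℕ => (L ^ D)⁻¹ * ((((m + D : ℕ)) : ℝ) ^ D * L ^ (m + D)) := by
      funext m
      rw [pow_add]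
      have : L ≠ 0 := ne_of_gt hlam0
      field_simp
      ring
    rw [heq]
    exact hshift.mul_left _
  apply Summable.of_nonneg_of_le (fun m => norm_nonneg _) (fun m => ?_) hmaj
  set n := (j - h) + m with hn
  have habs : ‖c n * lam ^ n *
        ((Real.sqrt (((n + 2 * h + 1).factorial : ℝ) * ((n).factorial : ℝ)) : ℝ) : ℂ) /
        (((n + h - j).factorial : ℕ) : ℂ)‖ =
      ‖c n‖ * L ^ n *
        Real.sqrt (((n + 2 * h + 1).factorial : ℝ) * ((n).factorial : ℝ)) /
        ((n + h - j).factorial : ℝ) := by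
    rw [norm_div, norm_mul, norm_mul, norm_pow, Complex.norm_real, Real.norm_eq_abs, Complex.norm_natCast,
      abs_of_nonneg (Real.sqrt_nonneg _)]
  rw [habs]
  have h1 : ‖c n‖ ≤ 1 := hc n
  have h2 : L ^ n ≤ L ^ m := pow_le_pow_of_le_one hL0 hlam1.le (by omega)
  have h3 : Real.sqrt (((n + 2 * h + 1).factorial : ℝ) * ((n).factorial : ℝ)) ≤
      ((m + D).factorial : ℝ) := by
    have hle : ((n).factorial : ℝ) ≤ ((n + 2 * h + 1).factorial : ℝ) := by
      exact_mod_cast Nat.factorial_le (by omega)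
    calc Real.sqrt (((n + 2 * h + 1).factorial : ℝ) * ((n).factorial : ℝ))
        ≤ Real.sqrt (((n + 2 * h + 1).factorial : ℝ) * ((n + 2 * h + 1).factorial : ℝ)) := by
          apply Real.sqrt_le_sqrt
          exact mul_le_mul_of_nonneg_left hle (by positivity)
      _ = ((n + 2 * h + 1).factorial : ℝ) := Real.sqrt_mul_self (by positivity)
      _ ≤ ((m + D).factorial : ℝ) := by exact_mod_cast Nat.factorial_le (by omega)
  have h4 : (1 : ℝ) / ((n + h - j).factorial : ℝ) ≤ 1 / ((m).factorial : ℝ) := by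
    apply one_div_le_one_div_of_le (by positivity)
    exact_mod_cast Nat.factorial_le (by omega)
  have h5 : ((m + D).factorial : ℝ) / ((m).factorial : ℝ) ≤ (((m + D : ℕ)) : ℝ) ^ D := by
    rw [div_le_iff₀ (by positivity)]
    have hnat : (m + D).factorial ≤ (m + D) ^ D * m.factorial := by
      have := Nat.factorial_mul_ascFactorial m D
      have h6 := Nat.ascFactorial_le_pow_add m D
      calc (m + D).factorial = m.factorial * (m + 1).ascFactorial D := (this).symm
        _ ≤ m.factorial * (m + D) ^ D := Nat.mul_le_mul_left _ h6
        _ = (m + D) ^ D * m.factorial := by ring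
    exact_mod_cast hnat
  calc ‖c n‖ * L ^ n *
        Real.sqrt (((n + 2 * h + 1).factorial : ℝ) * ((n).factorial : ℝ)) /
        ((n + h - j).factorial : ℝ)
      ≤ 1 * L ^ m * ((m + D).factorial : ℝ) / ((m).factorial : ℝ) := by
        gcongr <;> first
          | exact h1
          | exact h2
          | exact h3
          | (exact_mod_cast Nat.factorial_le (by omega))
          | omega
          | positivity
    _ = L ^ m * (((m + D).factorial : ℝ) / ((m).factorial : ℝ)) := by ring
    _ ≤ L ^ m * (((m + D : ℕ)) : ℝ) ^ D := by
        exact mul_le_mul_of_nonneg_left h5 (by positivity)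
    _ = (((m + D : ℕ)) : ℝ) ^ D * L ^ m := by ring

-- termwise final algebra
lemma termwise13 (lam : ℂ) (hlam : lam ≠ 0) (c : ℕ → ℂ) (h j m : ℕ) (hj : h ≤ j) :
    (((2 * j + 1).factorial : ℕ) : ℂ) * Aco lam c (2 * h + 1) (m + (j - h)) (j - h) =
      (((2 * j + 1).choose (j - h) : ℕ) : ℂ) * (1 - lam) ^ (2 * j + 2) *
        lam ^ ((h : ℤ) - (j : ℤ)) *
        (c ((j - h) + m) * lam ^ ((j - h) + m) *
          ((Real.sqrt ((((j - h) + m + 2 * h + 1).factorial : ℝ) *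
            (((j - h) + m).factorial : ℝ)) : ℝ) : ℂ) /
          ((((j - h) + m + h - j).factorial : ℕ) : ℂ)) := by
  set d := j - h with hd
  set k := 2 * h + 1 with hk
  set n := d + m with hn
  have e0 : m + d = n := by omega
  have e1 : d + m + h - j = m := by omega
  have e2 : n - d = m := by omega
  have e3 : n + k - m = j + h + 1 := by omega
  have e4 : d + m + 2 * h + 1 = n + k := by omega
  simp only [Aco]
  rw [e0, e1, e2, e4]
  -- zpow fact
  have hz : lam ^ ((h : ℤ) - (j : ℤ)) * lam ^ ((d + m : ℕ)) = lam ^ m := by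
    rw [← zpow_natCast lam (d + m), ← zpow_add₀ hlam, ← zpow_natCast lam m]
    congr 1
    omega
  -- sqrt fact (real)
  have hre : Real.sqrt ((n.factorial : ℝ) / ((n + k).factorial : ℝ)) * ((n + k).factorial : ℝ) =
      Real.sqrt (((n + k).factorial : ℝ) * (n.factorial : ℝ)) := by
    have hpos : (0 : ℝ) < ((n + k).factorial : ℝ) := by positivity
    rw [Real.sqrt_div (by positivity), Real.sqrt_mul (by positivity)]
    have hs : Real.sqrt ((n + k).factorial : ℝ) * Real.sqrt ((n + k).factorial : ℝ) =
        ((n + k).factorial : ℝ) := Real.mul_self_sqrt hpos.le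
    have hsne : Real.sqrt ((n + k).factorial : ℝ) ≠ 0 := by
      positivity
    field_simp
    nlinarith [hs, Real.sqrt_nonneg ((n.factorial : ℝ))]
  -- nat fact
  have hnat : (2 * j + 1).factorial * ((n + k).choose m) * m.factorial =
      (2 * j + 1).choose (j - h) * (n + k).factorial * (j - h).factorial := by
    have c1 : (n + k).choose m * m.factorial * (j + h + 1).factorial = (n + k).factorial := by
      have := Nat.choose_mul_factorial_mul_factorial (show m ≤ n + k by omega)
      rwa [e3] at this
    have c2 : (2 * j + 1).choose (j - h) * (j - h).factorial * (j + h + 1).factorial =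
        (2 * j + 1).factorial := by
      have := Nat.choose_mul_factorial_mul_factorial (show j - h ≤ 2 * j + 1 by omega)
      rwa [show 2 * j + 1 - (j - h) = j + h + 1 by omega] at this
    apply Nat.eq_of_mul_eq_mul_right (Nat.factorial_pos (j + h + 1))
    calc (2 * j + 1).factorial * ((n + k).choose m) * m.factorial * (j + h + 1).factorial
        = (2 * j + 1).factorial * ((n + k).choose m * m.factorial * (j + h + 1).factorial) := by ring
      _ = (2 * j + 1).factorial * (n + k).factorial := by rw [c1]
      _ = ((2 * j + 1).choose (j - h) * (j - h).factorial * (j + h + 1).factorial) *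
            (n + k).factorial := by rw [c2]
      _ = (2 * j + 1).choose (j - h) * (n + k).factorial * (j - h).factorial *
            (j + h + 1).factorial := by ring
  have hnatC : (((2 * j + 1).factorial : ℕ) : ℂ) * (((n + k).choose m : ℕ) : ℂ) *
      ((m.factorial : ℕ) : ℂ) = (((2 * j + 1).choose (j - h) : ℕ) : ℂ) *
      (((n + k).factorial : ℕ) : ℂ) * (((j - h).factorial : ℕ) : ℂ) := by
    exact_mod_cast congrArg (Nat.cast : ℕ → ℂ) hnat
  -- rewrite RHS zpow away
  have key : (((2 * j + 1).choose (j - h) : ℕ) : ℂ) * (1 - lam) ^ (2 * j + 2) *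
        lam ^ ((h : ℤ) - (j : ℤ)) *
        (c n * lam ^ ((d + m : ℕ)) *
          ((Real.sqrt (((n + k).factorial : ℝ) * (n.factorial : ℝ)) : ℝ) : ℂ) /
          ((m.factorial : ℕ) : ℂ)) =
      (((2 * j + 1).choose (j - h) : ℕ) : ℂ) * (1 - lam) ^ (2 * j + 2) *
        (c n * lam ^ m *
          ((Real.sqrt (((n + k).factorial : ℝ) * (n.factorial : ℝ)) : ℝ) : ℂ) /
          ((m.factorial : ℕ) : ℂ)) := by
    rw [← hz]
    ring
  rw [show (j - h) + m = n from by omega] at *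
  rw [key]
  -- pow merging : (1-lam)^(k+1) * (1-lam)^(2*d) = (1-lam)^(2j+2)
  have hpw : (1 - lam) ^ (k + 1) * (1 - lam) ^ (2 * d) = (1 - lam) ^ (2 * j + 2) := by
    rw [← pow_add]
    congr 1
    omega
  -- sqrt cast
  have hreC : ((Real.sqrt ((n.factorial : ℝ) / ((n + k).factorial : ℝ)) : ℝ) : ℂ) *
      (((n + k).factorial : ℕ) : ℂ) =
      ((Real.sqrt (((n + k).factorial : ℝ) * (n.factorial : ℝ)) : ℝ) : ℂ) := by
    rw [← hre]
    push_cast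
    ring
  rw [← hreC]
  generalize ((Real.sqrt ((n.factorial : ℝ) / ((n + k).factorial : ℝ)) : ℝ) : ℂ) = x
  have hmne : ((m.factorial : ℕ) : ℂ) ≠ 0 := by exact_mod_cast m.factorial_ne_zero
  have hdne : (((j - h).factorial : ℕ) : ℂ) ≠ 0 := by exact_mod_cast (j - h).factorial_ne_zero
  rw [← hpw]
  field_simp
  rw [div_eq_iff (by exact_mod_cast d.factorial_ne_zero)]
  linear_combination (c n * x * (1 - lam) ^ (k + 1) * (1 - lam) ^ (2 * d)) * hnatC


section ps
variable (lam : ℂ) (c : ℕ → ℂ) (h : ℕ) (F : ℝ → ℂ)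

noncomputable def pS13 : FormalMultilinearSeries ℝ ℝ ℂ :=
  fun l => ContinuousMultilinearMap.mkPiRing ℝ (Fin l) (coefn lam c h l)

lemma hFPS13 (hlam1 : ‖lam‖ < 1) (hc : ∀ n, ‖c n‖ ≤ 1)
    (hF : ∀ r : ℝ, F r = Complex.exp ((1 - lam) * (r : ℂ) ^ 2) *
      ∑' n : ℕ, c n * Kfun lam n (2 * h + 1) r) :
    HasFPowerSeriesOnBall F (pS13 lam c h) 0 ⊤ := by
  have hrad : (pS13 lam c h).radius = ⊤ := by
    apply FormalMultilinearSeries.radius_eq_top_of_summable_norm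
    intro r
    have := summable_norm_coefn lam hlam1 c hc h r r.coe_nonneg
    simpa [pS13, ContinuousMultilinearMap.norm_mkPiRing] using this
  refine ⟨hrad.ge, ENNReal.zero_lt_top, fun {y} _ => ?_⟩
  have h1 := hasSum_coefn lam hlam1 c hc h F hF y
  have he : ∀ l : ℕ, (pS13 lam c h l fun _ => y) = coefn lam c h l * (y : ℂ) ^ l := by
    intro l
    simp only [pS13, ContinuousMultilinearMap.mkPiRing_apply, Finset.prod_const, Finset.card_univ,
      Fintype.card_fin]
    rw [Complex.real_smul]
    push_cast
    ring
  simp only [he, zero_add]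
  exact h1

lemma derivEq13 (hlam1 : ‖lam‖ < 1) (hc : ∀ n, ‖c n‖ ≤ 1)
    (hF : ∀ r : ℝ, F r = Complex.exp ((1 - lam) * (r : ℂ) ^ 2) *
      ∑' n : ℕ, c n * Kfun lam n (2 * h + 1) r) (m : ℕ) :
    iteratedDeriv m F 0 = (m.factorial : ℂ) * coefn lam c h m := by
  have h1 := (hFPS13 lam c h F hlam1 hc hF).factorial_smul (1 : ℝ) m
  rw [iteratedDeriv_eq_iteratedFDeriv, ← h1]
  have : (pS13 lam c h m fun _ => (1 : ℝ)) = coefn lam c h m := by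
    simp [pS13, ContinuousMultilinearMap.mkPiRing_apply]
  rw [this, nsmul_eq_mul]

end ps

/-- Odd case of the differentiated series. -/
theorem stmt_13 (lam : ℂ) (hlam0 : 0 < ‖lam‖) (hlam1 : ‖lam‖ < 1)
    (c : ℕ → ℂ) (hc : ∀ n, ‖c n‖ ≤ 1) (h j : ℕ)
    (F : ℝ → ℂ)
    (hF : ∀ r : ℝ, F r = Complex.exp ((1 - lam) * (r : ℂ) ^ 2) *
      ∑' n : ℕ, c n * Kfun lam n (2 * h + 1) r) :
    Summable (fun m : ℕ => ‖c ((j - h) + m) * lam ^ ((j - h) + m) *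
        ((Real.sqrt ((((j - h) + m + 2 * h + 1).factorial : ℝ) * (((j - h) + m).factorial : ℝ)) : ℝ) : ℂ) /
        ((((j - h) + m + h - j).factorial : ℕ) : ℂ)‖) ∧
    ContDiffAt ℝ ((2 * j + 1 : ℕ) : ℕ∞) F 0 ∧
    iteratedDeriv (2 * j + 1) F 0 =
      (if h ≤ j then (((2 * j + 1).choose (j - h) : ℕ) : ℂ) else 0) *
        (1 - lam) ^ (2 * j + 2) * lam ^ ((h : ℤ) - (j : ℤ)) *
        ∑' m : ℕ,
          c ((j - h) + m) * lam ^ ((j - h) + m) *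
            ((Real.sqrt ((((j - h) + m + 2 * h + 1).factorial : ℝ) * (((j - h) + m).factorial : ℝ)) : ℝ) : ℂ) /
            ((((j - h) + m + h - j).factorial : ℕ) : ℂ) := by
  have hlam : lam ≠ 0 := by
    intro h0
    rw [h0] at hlam0
    simp at hlam0
  refine ⟨sumabs13 lam hlam0 hlam1 c hc h j, ?_, ?_⟩
  · exact (hFPS13 lam c h F hlam1 hc hF).analyticAt.contDiffAt
  · rw [derivEq13 lam c h F hlam1 hc hF (2 * j + 1)]
    by_cases hj : h ≤ j
    · rw [if_pos hj]
      rw [coefn, if_pos ⟨by omega, by omega⟩,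
        show (2 * j + 1 - (2 * h + 1)) / 2 = j - h by omega, aco]
      rw [← tsum_mul_left, ← tsum_mul_left]
      exact tsum_congr (fun m => termwise13 lam hlam c h j m hj)
    · rw [if_neg hj]
      rw [coefn, if_neg (by omega)]
      simp
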